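/- Let T be a tree with positive edge weights and no degree-2 vertices, and let c be a vertex of minimum leaf-status. Then for any vertex y ≠ c that is not adjacent to c, ℓ(y) > ℓ(x) where x is the neighbor of c on the c-y-path; in particular, c is a 'leaf-status center': leaf-status strictly increases along any path of length ≥ 2 away from c. -/

import Mathlib

open SimpleGraph Finset

noncomputable section

variable {V : Type*}

/-- The weight of a walk: sum of the weights of its edges. -/
def walkWeight {G : SimpleGraph V} (w : Sym2 V → ℝ) {x y : V} (p : G.Walk x y) : ℝ :=
  (p.edges.map w).sum

/-- The unique path between two vertices of a tree. -/
noncomputable def tpath {G : SimpleGraph V} (hT : G.IsTree) (x y : V) : G.Walk x y :=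
  (hT.existsUnique_path x y).choose

/-- The weighted distance between two vertices of a tree: the weight of the unique path. -/
noncomputable def tdist {G : SimpleGraph V} (hT : G.IsTree) (w : Sym2 V → ℝ) (x y : V) : ℝ :=
  walkWeight w (tpath hT x y)

/-- The distance from a vertex `x` to a path `p`: the minimum distance from `x`
to a vertex on `p`. -/
noncomputable def distToPath {G : SimpleGraph V} (hT : G.IsTree) (w : Sym2 V → ℝ)
    (x : V) {a b : V} (p : G.Walk a b) : ℝ :=
  sInf {r | ∃ y ∈ p.support, r = tdist hT w x y}

/-- The set of leaves of a graph. -/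
def leaves (G : SimpleGraph V) [Fintype V] [DecidableRel G.Adj] : Finset V :=
  Finset.univ.filter (fun v => G.degree v = 1)

/-- The leaf-status of a vertex: the sum of its distances to all leaves. -/
noncomputable def leafStatus {G : SimpleGraph V} [Fintype V] [DecidableRel G.Adj]
    (hT : G.IsTree) (w : Sym2 V → ℝ) (u : V) : ℝ :=
  ∑ x ∈ leaves G, tdist hT w u x

/-- The leaf-status of a path: the sum of the distances of all leaves to the path. -/
noncomputable def pathLeafStatus {G : SimpleGraph V} [Fintype V] [DecidableRel G.Adj]
    (hT : G.IsTree) (w : Sym2 V → ℝ) {a b : V} (p : G.Walk a b) : ℝ :=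
  ∑ x ∈ leaves G, distToPath hT w x p

/-- `Lside hT w u v` is the set `L^{uv}_u` of leaves strictly closer to `u` than to `v`. -/
noncomputable def Lside {G : SimpleGraph V} [Fintype V] [DecidableRel G.Adj]
    (hT : G.IsTree) (w : Sym2 V → ℝ) (u v : V) : Finset V :=
  (leaves G).filter (fun x => tdist hT w x u < tdist hT w x v)

namespace Stmt14Aux

variable {G : SimpleGraph V} (hT : G.IsTree) (w : Sym2 V → ℝ)

lemma tpath_isPath (x y : V) : (tpath hT x y).IsPath :=
  (hT.existsUnique_path x y).choose_spec.1

lemma eq_tpath {x y : V} (p : G.Walk x y) (hp : p.IsPath) : p = tpath hT x y :=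
  (hT.existsUnique_path x y).choose_spec.2 p hp

lemma walkWeight_cons {x y z : V} (h : G.Adj x y) (p : G.Walk y z) :
    walkWeight w (Walk.cons h p) = w s(x, y) + walkWeight w p := by
  simp [walkWeight]

lemma walkWeight_append {x y z : V} (p : G.Walk x y) (q : G.Walk y z) :
    walkWeight w (p.append q) = walkWeight w p + walkWeight w q := by
  simp [walkWeight, SimpleGraph.Walk.edges_append]

lemma walkWeight_reverse {x y : V} (p : G.Walk x y) :
    walkWeight w p.reverse = walkWeight w p := by
  simp [walkWeight, SimpleGraph.Walk.edges_reverse, List.map_reverse, List.sum_reverse]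

include hT in
lemma tdist_symm (x y : V) : tdist hT w x y = tdist hT w y x := by
  rw [tdist, tdist, ← eq_tpath hT (tpath hT x y).reverse ((tpath_isPath hT x y).reverse),
    walkWeight_reverse]

include hT in
lemma tdist_adj {u v : V} (h : G.Adj u v) : tdist hT w u v = w s(u, v) := by
  rw [tdist, ← eq_tpath hT (Walk.cons h Walk.nil)
    (by simp [Walk.cons_isPath_iff, h.ne])]
  simp [walkWeight]

include hT in
lemma tdist_add [DecidableEq V] {a b z : V} (h : z ∈ (tpath hT a b).support) :
    tdist hT w a b = tdist hT w a z + tdist hT w z b := by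
  have hp := tpath_isPath hT a b
  have e1 : ((tpath hT a b).takeUntil z h) = tpath hT a z := eq_tpath hT _ (hp.takeUntil h)
  have e2 : ((tpath hT a b).dropUntil z h) = tpath hT z b := eq_tpath hT _ (hp.dropUntil h)
  calc tdist hT w a b
      = walkWeight w (((tpath hT a b).takeUntil z h).append ((tpath hT a b).dropUntil z h)) := by
        rw [Walk.take_spec]; rfl
    _ = tdist hT w a z + tdist hT w z b := by rw [walkWeight_append, e1, e2]; rfl

include hT in
lemma tdist_dichotomy {u v : V} (h : G.Adj u v) (t : V) :
    (u ∈ (tpath hT t v).support ∧ tdist hT w t v = tdist hT w t u + w s(u, v)) ∨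
    (v ∈ (tpath hT t u).support ∧ tdist hT w t u = tdist hT w t v + w s(u, v)) := by
  classical
  by_cases hv : v ∈ (tpath hT t u).support
  · right
    refine ⟨hv, ?_⟩
    rw [tdist_add hT w hv, tdist_adj hT w h.symm, Sym2.eq_swap]
  · left
    set p := tpath hT t u with hpdef
    have hpp : (Walk.cons h.symm p.reverse).IsPath := by
      rw [Walk.cons_isPath_iff]
      exact ⟨(tpath_isPath hT t u).reverse, by simpa using hv⟩
    have hq : (Walk.cons h.symm p.reverse).reverse = tpath hT t v :=
      eq_tpath hT _ hpp.reverse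
    constructor
    · rw [← hq, Walk.support_reverse, List.mem_reverse]
      simp [Walk.support_cons]
    · rw [tdist, ← hq, walkWeight_reverse, walkWeight_cons, walkWeight_reverse, Sym2.eq_swap]
      rw [tdist]
      ring

include hT in
/-- In a tree, a path ending at `v` contains at most one neighbour of `v` in its support. -/
lemma adj_support_eq {t v : V} {p : G.Walk t v} (hp : p.IsPath) {s₁ s₂ : V}
    (h1 : s₁ ∈ p.support) (h2 : s₂ ∈ p.support) (a1 : G.Adj s₁ v) (a2 : G.Adj s₂ v) :
    s₁ = s₂ := by
  classical
  have key : ∀ s (hs : s ∈ p.support) (ha : G.Adj s v),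
      p.support = (p.takeUntil s hs).support ++ [v] := by
    intro s hs ha
    have hd : (p.dropUntil s hs) = Walk.cons ha Walk.nil := by
      rw [eq_tpath hT _ (hp.dropUntil hs),
        ← eq_tpath hT (Walk.cons ha Walk.nil) (by simp [Walk.cons_isPath_iff, ha.ne])]
    conv_lhs => rw [← p.take_spec hs]
    rw [Walk.support_append, hd]
    simp
  have e : (p.takeUntil s₁ h1).support ++ [v] = (p.takeUntil s₂ h2).support ++ [v] :=
    (key s₁ h1 a1).symm.trans (key s₂ h2 a2)
  have e2 : (p.takeUntil s₁ h1).support = (p.takeUntil s₂ h2).support :=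
    List.append_cancel_right e
  have g1 := Walk.getLast_support (p.takeUntil s₁ h1)
  have g2 := Walk.getLast_support (p.takeUntil s₂ h2)
  rw [← g1, ← g2]
  congr 1

include hT in
lemma exists_leaf [Fintype V] [DecidableRel G.Adj] (hw : ∀ e ∈ G.edgeSet, 0 < w e)
    {u v : V} (h : G.Adj u v) :
    ∃ t, G.degree t = 1 ∧ u ∈ (tpath hT v t).support := by
  classical
  set S : Finset V := Finset.univ.filter (fun t => u ∈ (tpath hT v t).support) with hS
  have hne : S.Nonempty := ⟨u, by simp [hS, Walk.end_mem_support]⟩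
  obtain ⟨t, htS, hmax⟩ := Finset.exists_max_image S (fun t => tdist hT w v t) hne
  have htu : u ∈ (tpath hT v t).support := by simpa [hS] using htS
  refine ⟨t, ?_, htu⟩
  have htv : t ≠ v := by
    rintro rfl
    rw [← eq_tpath hT Walk.nil Walk.IsPath.nil] at htu
    simp at htu
    exact h.ne htu
  have hnbr : ∀ s, G.Adj t s → s ∈ (tpath hT v t).support := by
    intro s hs
    have hws : 0 < w s(s, t) := hw _ (G.mem_edgeSet.2 hs.symm)
    rcases tdist_dichotomy hT w hs.symm v with ⟨h1, _⟩ | ⟨h2, he2⟩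
    · exact h1
    · exfalso
      have hsub : (tpath hT v t).support ⊆ (tpath hT v s).support := by
        rw [← eq_tpath hT ((tpath hT v s).takeUntil t h2)
          ((tpath_isPath hT v s).takeUntil h2)]
        exact Walk.support_takeUntil_subset _ h2
      have hsS : s ∈ S := by simp [hS]; exact hsub htu
      have := hmax s hsS
      linarith
  obtain ⟨s₀, hs₀, -, -⟩ := Walk.exists_eq_cons_of_ne htv ((tpath hT v t).reverse)
  have huniq : ∀ s, G.Adj t s → s = s₀ := fun s hs =>
    adj_support_eq hT (tpath_isPath hT v t) (hnbr s hs) (hnbr s₀ hs₀) hs.symm hs₀.symm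
  have hnf : G.neighborFinset t = {s₀} := by
    ext s
    simp only [mem_neighborFinset, Finset.mem_singleton]
    exact ⟨fun hs => huniq s hs, fun hse => hse ▸ hs₀⟩
  rw [← SimpleGraph.card_neighborFinset_eq_degree, hnf, Finset.card_singleton]

include hT in
lemma Lside_eq_filter_not [Fintype V] [DecidableRel G.Adj] (hw : ∀ e ∈ G.edgeSet, 0 < w e)
    {u v : V} (h : G.Adj u v) :
    Lside hT w v u = (leaves G).filter (fun t => ¬ tdist hT w t u < tdist hT w t v) := by
  have hwe : 0 < w s(u, v) := hw _ (G.mem_edgeSet.2 h)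
  apply Finset.filter_congr
  intro t _
  rcases tdist_dichotomy hT w h t with ⟨_, he⟩ | ⟨_, he⟩ <;>
    · constructor
      · intro h1 h2
        linarith
      · intro h1
        by_contra h2
        push_neg at h1 h2
        rcases lt_or_eq_of_le h1 with h3 | h3 <;> [linarith; (rw [h3] at he; linarith)]

include hT in
lemma Lside_card_add [Fintype V] [DecidableRel G.Adj] (hw : ∀ e ∈ G.edgeSet, 0 < w e)
    {u v : V} (h : G.Adj u v) :
    (Lside hT w u v).card + (Lside hT w v u).card = (leaves G).card := by
  rw [Lside, Lside_eq_filter_not hT w hw h, Finset.card_filter_add_card_filter_not]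

include hT in
lemma leafStatus_sub [Fintype V] [DecidableRel G.Adj] (hw : ∀ e ∈ G.edgeSet, 0 < w e)
    {u v : V} (h : G.Adj u v) :
    leafStatus hT w v - leafStatus hT w u
      = w s(u, v) * (((Lside hT w u v).card : ℝ) - ((Lside hT w v u).card : ℝ)) := by
  classical
  have hwe : 0 < w s(u, v) := hw _ (G.mem_edgeSet.2 h)
  have key : ∀ t ∈ leaves G, tdist hT w v t - tdist hT w u t =
      (if tdist hT w t u < tdist hT w t v then w s(u, v) else - w s(u, v)) := by
    intro t _
    rcases tdist_dichotomy hT w h t with ⟨_, he⟩ | ⟨_, he⟩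
    · rw [tdist_symm hT w v t, tdist_symm hT w u t, if_pos (by linarith), he]; ring
    · rw [tdist_symm hT w v t, tdist_symm hT w u t, if_neg (by intro hcon; linarith), he]; ring
  have h1 : leafStatus hT w v - leafStatus hT w u
      = ∑ t ∈ leaves G, (tdist hT w v t - tdist hT w u t) := by
    rw [leafStatus, leafStatus, ← Finset.sum_sub_distrib]
  rw [h1, Finset.sum_congr rfl key, Finset.sum_ite, Finset.sum_const, Finset.sum_const]
  rw [show ((leaves G).filter fun t => tdist hT w t u < tdist hT w t v) = Lside hT w u v from rfl]
  rw [← Lside_eq_filter_not hT w hw h]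
  simp only [nsmul_eq_mul]
  ring

include hT in
lemma leafStatus_lt [Fintype V] [DecidableRel G.Adj] (hw : ∀ e ∈ G.edgeSet, 0 < w e)
    {u v : V} (h : G.Adj u v)
    (hcard : (Lside hT w v u).card < (Lside hT w u v).card) :
    leafStatus hT w u < leafStatus hT w v := by
  have hwe : 0 < w s(u, v) := hw _ (G.mem_edgeSet.2 h)
  have hs := leafStatus_sub hT w hw h
  have hlt : ((Lside hT w v u).card : ℝ) < ((Lside hT w u v).card : ℝ) := by exact_mod_cast hcard
  nlinarith

include hT in
lemma Lside_card_le_of_le [Fintype V] [DecidableRel G.Adj] (hw : ∀ e ∈ G.edgeSet, 0 < w e)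
    {u v : V} (h : G.Adj u v) (hls : leafStatus hT w u ≤ leafStatus hT w v) :
    (Lside hT w v u).card ≤ (Lside hT w u v).card := by
  by_contra hcon
  push_neg at hcon
  have := leafStatus_lt hT w hw h.symm hcon
  linarith

include hT in
lemma Lside_subset [Fintype V] [DecidableRel G.Adj] (hw : ∀ e ∈ G.edgeSet, 0 < w e)
    {u v z : V} (h1 : G.Adj u v) (h2 : G.Adj v z) (huz : u ≠ z) :
    Lside hT w z v ⊆ Lside hT w v u := by
  intro t ht
  rw [Lside, Finset.mem_filter] at ht ⊢
  refine ⟨ht.1, ?_⟩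
  have hlt := ht.2
  have hw1 : 0 < w s(u, v) := hw _ (G.mem_edgeSet.2 h1)
  have hw2 : 0 < w s(z, v) := hw _ (G.mem_edgeSet.2 h2.symm)
  rcases tdist_dichotomy hT w h1 t with ⟨hu, he⟩ | ⟨_, he⟩
  · rcases tdist_dichotomy hT w h2.symm t with ⟨hz, _⟩ | ⟨_, he2⟩
    · exact absurd (adj_support_eq hT (tpath_isPath hT t v) hu hz h1 h2.symm) huz
    · linarith
  · linarith

include hT in
lemma walkIncr [Fintype V] [DecidableRel G.Adj] (hw : ∀ e ∈ G.edgeSet, 0 < w e)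
    {v y : V} (q : G.Walk v y) :
    ∀ u, ∀ h : G.Adj u v, (Walk.cons h q).IsPath →
      2 * (Lside hT w v u).card < (leaves G).card →
      leafStatus hT w v ≤ leafStatus hT w y := by
  induction q with
  | nil => exact fun _ _ _ _ => le_refl _
  | @cons a b cc h' r ih =>
    intro u h hq hcard
    rw [Walk.cons_isPath_iff] at hq
    have hune : u ≠ b := by
      intro he
      apply hq.2
      rw [he]
      simp
    have hsub : Lside hT w b a ⊆ Lside hT w a u := Lside_subset hT w hw h h' hune
    have hcard2 := Finset.card_le_card hsub
    have hcard' : 2 * (Lside hT w b a).card < (leaves G).card := by omega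
    have hpar := Lside_card_add hT w hw h'
    have hlt : leafStatus hT w a < leafStatus hT w b :=
      leafStatus_lt hT w hw h' (by omega)
    have hle := ih a h' hq.1 hcard'
    linarith

end Stmt14Aux


open Stmt14Aux in
/-- if `c` has minimum leaf-status, then for any vertex `y`
distinct from and not adjacent to `c`, with `x` the neighbor of `c` on the
`c`-`y`-path, we have `ℓ(y) > ℓ(x)`. -/
theorem stmt14 {V : Type*} [Fintype V] {G : SimpleGraph V} [DecidableRel G.Adj]
    (hT : G.IsTree) (w : Sym2 V → ℝ) (hw : ∀ e ∈ G.edgeSet, 0 < w e)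
    (hdeg : ∀ x : V, G.degree x ≠ 2)
    (c : V) (hc : ∀ y : V, leafStatus hT w c ≤ leafStatus hT w y)
    (y : V) (hyc : y ≠ c) (hadj : ¬ G.Adj c y)
    (p : G.Walk c y) (hp : p.IsPath) (x : V) (hx : x = p.getVert 1) :
    leafStatus hT w x < leafStatus hT w y := by
  classical
  subst hx
  cases p with
  | nil => exact absurd rfl hyc
  | @cons _ x₁ _ h q =>
    cases q with
    | nil => exact absurd h hadj
    | @cons _ v₂ _ h₂ q₂ =>
      have hgv : (Walk.cons h (Walk.cons h₂ q₂)).getVert 1 = x₁ := by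
        rw [Walk.getVert_cons _ _ Nat.one_ne_zero]
        exact Walk.getVert_zero _
      rw [hgv]
      rw [Walk.cons_isPath_iff] at hp
      obtain ⟨hq, hcnotin⟩ := hp
      have hcv2 : c ≠ v₂ := by
        intro he
        apply hcnotin
        rw [he]
        simp
      -- x₁ has a third neighbour z
      have h2le : 2 ≤ G.degree x₁ := by
        have hsub : ({c, v₂} : Finset V) ⊆ G.neighborFinset x₁ := by
          intro s hs
          rcases Finset.mem_insert.1 hs with rfl | hs
          · exact (SimpleGraph.mem_neighborFinset _ _ _).2 h.symm
          · rw [Finset.mem_singleton] at hs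
            subst hs
            exact (SimpleGraph.mem_neighborFinset _ _ _).2 h₂
        calc 2 = ({c, v₂} : Finset V).card := (Finset.card_pair hcv2).symm
          _ ≤ _ := Finset.card_le_card hsub
      have h3le : 3 ≤ G.degree x₁ := by
        have := hdeg x₁
        omega
      obtain ⟨z, hzmem, hznot⟩ : ∃ z ∈ G.neighborFinset x₁, z ∉ ({c, v₂} : Finset V) := by
        by_contra hcon
        push_neg at hcon
        have hle := Finset.card_le_card hcon
        rw [Finset.card_pair hcv2, SimpleGraph.card_neighborFinset_eq_degree] at hle
        omega
      have hzadj : G.Adj x₁ z := (SimpleGraph.mem_neighborFinset _ _ _).1 hzmem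
      have hzc : z ≠ c := by intro he; exact hznot (by rw [he]; simp)
      have hzv2 : z ≠ v₂ := by intro he; exact hznot (by rw [he]; simp)
      obtain ⟨t, htdeg, htmem⟩ := exists_leaf hT w hw hzadj.symm
      have hzsupp : z ∈ (tpath hT t x₁).support := by
        rw [← eq_tpath hT (tpath hT x₁ t).reverse ((tpath_isPath hT x₁ t).reverse),
          Walk.support_reverse, List.mem_reverse]
        exact htmem
      have key : ∀ s, G.Adj s x₁ → s ≠ z → tdist hT w t x₁ < tdist hT w t s := by
        intro s hs hsz
        have hws : 0 < w s(s, x₁) := hw _ (G.mem_edgeSet.2 hs)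
        rcases tdist_dichotomy hT w hs t with ⟨hsupp, _⟩ | ⟨_, he⟩
        · exact absurd (adj_support_eq hT (tpath_isPath hT t x₁) hsupp hzsupp hs hzadj.symm) hsz
        · linarith
      have htleaf : t ∈ leaves G := by simp [leaves, htdeg]
      have htc : t ∈ Lside hT w x₁ c := by
        rw [Lside, Finset.mem_filter]
        exact ⟨htleaf, key c h (Ne.symm hzc)⟩
      have htv2 : t ∉ Lside hT w v₂ x₁ := by
        rw [Lside, Finset.mem_filter]
        rintro ⟨-, hlt⟩
        have := key v₂ h₂.symm (Ne.symm hzv2)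
        linarith
      have hsub : Lside hT w v₂ x₁ ⊆ Lside hT w x₁ c := Lside_subset hT w hw h h₂ hcv2
      have hlt1 : (Lside hT w v₂ x₁).card < (Lside hT w x₁ c).card :=
        Finset.card_lt_card ((Finset.ssubset_iff_of_subset hsub).2 ⟨t, htc, htv2⟩)
      have hle1 : (Lside hT w x₁ c).card ≤ (Lside hT w c x₁).card :=
        Lside_card_le_of_le hT w hw h (hc x₁)
      have hpar1 := Lside_card_add hT w hw h
      have hpar2 := Lside_card_add hT w hw h₂
      have hcard : 2 * (Lside hT w v₂ x₁).card < (leaves G).card := by omega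
      have hstep : leafStatus hT w x₁ < leafStatus hT w v₂ :=
        leafStatus_lt hT w hw h₂ (by omega)
      have hrest : leafStatus hT w v₂ ≤ leafStatus hT w y :=
        walkIncr hT w hw q₂ x₁ h₂ hq hcard
      linarith
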